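/- Let k be a field and n ≥ 3. For x ∈ k let X(x) be the block-shift (n−1)×(n−1) matrix over k with entries X(x)_{i,j} = x if j ≡ i + 1 (mod n−1) and 0 otherwise. If x ≠ 0, then the block-shift matrix X((x^{n−2})⁻¹) is the querelement of X(x) with respect to the n-ary matrix multiplication: X(x)^{n−1} · X((x^{n−2})⁻¹) = X(x). -/

import Mathlib

/-- The block-shift `(n−1) × (n−1)` matrix `X(x)` with entries
`X(x)_{i,j} = x` if `j ≡ i + 1 (mod n−1)` and `0` otherwise. -/
def blockShift (n : ℕ) {k : Type*} [CommRing k] (x : k) :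
    Matrix (Fin (n - 1)) (Fin (n - 1)) k :=
  Matrix.of fun i j => if (j : ℕ) = ((i : ℕ) + 1) % (n - 1) then x else 0

lemma permMatrix_one {k : Type*} [CommRing k] {m : ℕ} :
    ((1 : Equiv.Perm (Fin m)).permMatrix k) = 1 := by
  ext i j
  simp [Equiv.Perm.permMatrix, PEquiv.toMatrix_apply, Equiv.toPEquiv_apply,
    Matrix.one_apply, eq_comm]

lemma permMatrix_pow {k : Type*} [CommRing k] {m : ℕ} (σ : Equiv.Perm (Fin m))
    (j : ℕ) : (σ.permMatrix k) ^ j = (σ ^ j).permMatrix k := by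
  induction j with
  | zero => simpa using permMatrix_one.symm
  | succ j ih =>
    rw [pow_succ, ih, pow_succ']
    show _ = ((σ ^ j).trans σ).toPEquiv.toMatrix
    rw [Equiv.toPEquiv_trans, PEquiv.toMatrix_trans]

lemma blockShift_eq_smul_permMatrix {k : Type*} [CommRing k] (n : ℕ) (hn : 3 ≤ n)
    (x : k) :
    haveI : NeZero (n - 1) := ⟨by omega⟩
    blockShift n x = x • (Equiv.addRight (1 : Fin (n - 1))).permMatrix k := by
  haveI : NeZero (n - 1) := ⟨by omega⟩
  have h1 : ((1 : Fin (n - 1)) : ℕ) = 1 := by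
    rw [Fin.val_one', Nat.mod_eq_of_lt (by omega)]
  ext i j
  simp only [blockShift, Matrix.of_apply, Matrix.smul_apply, Equiv.Perm.permMatrix,
    PEquiv.toMatrix_apply, Equiv.toPEquiv_apply, Option.mem_def, Option.some.injEq,
    Equiv.coe_addRight, smul_eq_mul]
  simp only [show (i + 1 = j) ↔ ((j : ℕ) = ((i : ℕ) + 1) % (n - 1)) by
    rw [eq_comm, Fin.ext_iff, Fin.add_def, h1]]
  split <;> simp

/-- over a field, for `n ≥ 3` and `x ≠ 0`, the block-shift matrix
`X((x^{n−2})⁻¹)` is the querelement of `X(x)` for the `n`-ary matrix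
multiplication: `X(x)^{n−1} · X((x^{n−2})⁻¹) = X(x)`. -/
theorem blockShift_querelement {k : Type*} [Field k] (n : ℕ) (hn : 3 ≤ n)
    (x : k) (hx : x ≠ 0) :
    (blockShift n x) ^ (n - 1) * blockShift n ((x ^ (n - 2))⁻¹) =
      blockShift n x := by
  haveI : NeZero (n - 1) := ⟨by omega⟩
  rw [blockShift_eq_smul_permMatrix n hn x,
    blockShift_eq_smul_permMatrix n hn ((x ^ (n - 2))⁻¹)]
  rw [smul_pow, permMatrix_pow]
  have hσ : (Equiv.addRight (1 : Fin (n - 1))) ^ (n - 1) = 1 := by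
    open Fin.NatCast in
    have key : ∀ m : ℕ, (Equiv.addRight (1 : Fin (n - 1))) ^ m =
        Equiv.addRight ((m : Fin (n - 1))) := by
      intro m
      induction m with
      | zero => ext i; simp
      | succ m ih =>
        rw [pow_succ, ih]; ext i
        simp only [Equiv.Perm.coe_mul, Function.comp_apply, Equiv.coe_addRight, Nat.cast_succ]
        abel
    rw [key, Fin.natCast_self,
      Equiv.addRight_zero]
  rw [hσ, permMatrix_one, smul_mul_assoc, one_mul, smul_smul]
  congr 1
  have hp : x ^ (n - 1) = x * x ^ (n - 2) := by
    rw [← pow_succ']; congr 1; omega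
  field_simp [hp]
  rw [hp, mul_comm]
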